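/- Let q be an odd prime power and let s, s' ∈ 𝔽_q be distinct. Then the affine points of the conic C_{s'} (its points other than Y_∞ = [0:1:0]) are all external to the conic C_s if χ(s'−s) = 1, and are all internal to C_s if χ(s'−s) = −1. -/

import Mathlib

/-- The projective plane `PG(2,q)`: points are 1-dimensional subspaces of `F³`,
here modeled by `Projectivization`. -/
abbrev PGPoint (F : Type) [Field F] := Projectivization F (Fin 3 → F)

/-- Lines of `PG(2,q)` are the 2-dimensional subspaces of `F³`. -/
def IsLine (F : Type) [Field F] (W : Submodule F (Fin 3 → F)) : Prop :=
  Module.finrank F W = 2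

/-- A point lies on a line if its 1-dimensional subspace is contained in it. -/
def onLine {F : Type} [Field F] (P : PGPoint F) (W : Submodule F (Fin 3 → F)) : Prop :=
  P.submodule ≤ W

/-- The irreducible conic `C = {[x:y:z] : yz = x²}`. -/
def conicC (F : Type) [Field F] : Set (PGPoint F) :=
  {P | P.rep 1 * P.rep 2 = (P.rep 0) ^ 2}

/-- A line is tangent to a conic if it meets it in exactly one point. -/
def Tangent {F : Type} [Field F] (Con : Set (PGPoint F))
    (W : Submodule F (Fin 3 → F)) : Prop :=
  IsLine F W ∧ Set.ncard {P | P ∈ Con ∧ onLine P W} = 1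

/-- A line is a secant of a conic if it meets it in exactly two points. -/
def Secant {F : Type} [Field F] (Con : Set (PGPoint F))
    (W : Submodule F (Fin 3 → F)) : Prop :=
  IsLine F W ∧ Set.ncard {P | P ∈ Con ∧ onLine P W} = 2

/-- A line is external to a conic if it meets it in no point. -/
def ExternalLine {F : Type} [Field F] (Con : Set (PGPoint F))
    (W : Submodule F (Fin 3 → F)) : Prop :=
  IsLine F W ∧ Set.ncard {P | P ∈ Con ∧ onLine P W} = 0

/-- A point not on the conic is external to it if it lies on some tangent line. -/
def ExternalPt {F : Type} [Field F] (Con : Set (PGPoint F)) (P : PGPoint F) : Prop :=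
  P ∉ Con ∧ ∃ W, Tangent Con W ∧ onLine P W

/-- A point not on the conic is internal to it if it lies on no tangent line. -/
def InternalPt {F : Type} [Field F] (Con : Set (PGPoint F)) (P : PGPoint F) : Prop :=
  P ∉ Con ∧ ¬ ∃ W, Tangent Con W ∧ onLine P W

/-- A line partition of the set of internal points to a conic: a set of lines such
that every internal point lies on exactly one line of it, and every line of it
contains at least one internal point. -/
def LinePartition {F : Type} [Field F] (Con : Set (PGPoint F))
    (L : Set (Submodule F (Fin 3 → F))) : Prop :=
  (∀ W ∈ L, IsLine F W) ∧
  (∀ P : PGPoint F, InternalPt Con P → ∃! W, W ∈ L ∧ onLine P W) ∧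
  (∀ W ∈ L, ∃ P : PGPoint F, InternalPt Con P ∧ onLine P W)

/-- A Baer subplane of `PG(2,q)` (`q` a square): the points `[v]`, `v ≠ 0`, of a free
rank-3 module over a subfield of order `√q` whose `F`-span is everything. -/
def IsBaerSubplane {F : Type} [Field F] [Fintype F] (B : Set (PGPoint F)) : Prop :=
  ∃ (K : Subfield F) (M : Submodule K (Fin 3 → F)),
    Nat.card K * Nat.card K = Fintype.card F ∧
    Module.finrank K M = 3 ∧
    Submodule.span F (M : Set (Fin 3 → F)) = ⊤ ∧
    B = {P : PGPoint F | ∃ v ∈ M, v ≠ 0 ∧ P.submodule = Submodule.span F {v}}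

/-- The lines of a Baer subplane: the lines of `PG(2,q)` containing at least two of
its points. -/
def BaerLine {F : Type} [Field F] (B : Set (PGPoint F))
    (W : Submodule F (Fin 3 → F)) : Prop :=
  IsLine F W ∧ 2 ≤ Set.ncard {P | P ∈ B ∧ onLine P W}

/-- The conic `C_s = {[x:y:z] : yz = x² - s z²}` of the pencil `𝓕`. -/
def conicCs (F : Type) [Field F] (s : F) : Set (PGPoint F) :=
  {P | P.rep 1 * P.rep 2 = (P.rep 0) ^ 2 - s * (P.rep 2) ^ 2}

/-- The infinite point `Y_∞ = [0:1:0]`. -/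
def Yinf (F : Type) [Field F] : PGPoint F :=
  Projectivization.mk F ![0, 1, 0] (by
    intro h
    have := congrFun h 1
    simp at this)

/-- The line of `PG(2,q)` with affine equation `y = αx + β`, i.e. the 2-dimensional
subspace `{(x,y,z) : y = αx + βz}` of `F³`. -/
def affLine {F : Type} [Field F] (α β : F) : Submodule F (Fin 3 → F) where
  carrier := {v | v 1 = α * v 0 + β * v 2}
  zero_mem' := by simp
  add_mem' := by
    intro a b ha hb
    simp only [Set.mem_setOf_eq, Pi.add_apply] at *
    rw [ha, hb]; ring
  smul_mem' := by
    intro c v hv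
    simp only [Set.mem_setOf_eq, Pi.smul_apply, smul_eq_mul] at *
    rw [hv]; ring


section ProofHelpers

open Projectivization

variable {F : Type} [Field F]

lemma rep_spec (v : Fin 3 → F) (hv : v ≠ 0) :
    ∃ a : F, a ≠ 0 ∧ ∀ i, (Projectivization.mk F v hv).rep i = a * v i := by
  obtain ⟨a, ha⟩ := (Projectivization.mk_eq_mk_iff F _ _
    (Projectivization.rep_nonzero _) hv).mp (Projectivization.mk_rep _)
  exact ⟨a, a.ne_zero, fun i => by rw [← ha]; simp [Units.smul_def]⟩

lemma mem_conicCs_mk {s : F} {v : Fin 3 → F} (hv : v ≠ 0) :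
    Projectivization.mk F v hv ∈ conicCs F s ↔ v 1 * v 2 = v 0 ^ 2 - s * v 2 ^ 2 := by
  obtain ⟨a, ha, hrep⟩ := rep_spec v hv
  simp only [conicCs, Set.mem_setOf_eq, hrep]
  constructor
  · intro h
    have h2 : a ^ 2 * (v 1 * v 2) = a ^ 2 * (v 0 ^ 2 - s * v 2 ^ 2) := by
      linear_combination h
    exact mul_left_cancel₀ (pow_ne_zero 2 ha) h2
  · intro h; linear_combination a ^ 2 * h

lemma onLine_mk {v : Fin 3 → F} (hv : v ≠ 0) (W : Submodule F (Fin 3 → F)) :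
    onLine (Projectivization.mk F v hv) W ↔ v ∈ W := by
  rw [onLine, Projectivization.submodule_mk, Submodule.span_singleton_le_iff_mem]

lemma onLine_rep (P : PGPoint F) (W : Submodule F (Fin 3 → F)) :
    onLine P W ↔ P.rep ∈ W := by
  rw [onLine, Projectivization.submodule_eq, Submodule.span_singleton_le_iff_mem]

def lfun (a b c : F) : (Fin 3 → F) →ₗ[F] F where
  toFun v := a * v 0 + b * v 1 + c * v 2
  map_add' x y := by simp only [Pi.add_apply]; ring
  map_smul' r x := by simp only [Pi.smul_apply, smul_eq_mul, RingHom.id_apply]; ring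

lemma finrank_ker_lfun {a b c : F} (v : Fin 3 → F) (hv : lfun a b c v = 1) :
    Module.finrank F (LinearMap.ker (lfun a b c)) = 2 := by
  have hsurj : Function.Surjective (lfun a b c) := by
    intro y
    exact ⟨y • v, by rw [map_smul, hv, smul_eq_mul, mul_one]⟩
  have h1 : LinearMap.range (lfun a b c) = ⊤ := LinearMap.range_eq_top.mpr hsurj
  have := LinearMap.finrank_range_add_finrank_ker (lfun a b c)
  rw [h1, Module.finrank_fin_fun] at this
  simp only [finrank_top, Module.finrank_self] at this
  omega

/-- Every 2-dim subspace of F³ is the kernel of a functional v ↦ a v0 + b v1 + c v2. -/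
lemma exists_lfun_of_finrank_two {W : Submodule F (Fin 3 → F)}
    (hW : Module.finrank F W = 2) :
    ∃ a b c : F, ¬(a = 0 ∧ b = 0 ∧ c = 0) ∧
      ∀ v, v ∈ W ↔ a * v 0 + b * v 1 + c * v 2 = 0 := by
  have hq : Module.finrank F ((Fin 3 → F) ⧸ W) = 1 := by
    have := Submodule.finrank_quotient_add_finrank W
    rw [hW, Module.finrank_fin_fun] at this
    omega
  obtain b := Module.finBasisOfFinrankEq F ((Fin 3 → F) ⧸ W) hq
  set φ : (Fin 3 → F) →ₗ[F] F :=
    (Finsupp.lapply (0 : Fin 1)).comp (b.repr.toLinearMap.comp W.mkQ) with hφdef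
  have hker : ∀ v, v ∈ W ↔ φ v = 0 := by
    intro v
    simp only [hφdef, LinearMap.comp_apply, Finsupp.lapply_apply, LinearEquiv.coe_coe,
      Submodule.mkQ_apply]
    constructor
    · intro h
      have : Submodule.Quotient.mk v = (0 : (Fin 3 → F) ⧸ W) :=
        (Submodule.Quotient.mk_eq_zero W).mpr h
      rw [this]; simp
    · intro h
      have hz : b.repr (Submodule.Quotient.mk v) = 0 := by
        apply Finsupp.ext; intro i
        have hi : i = 0 := Fin.eq_zero i
        rw [hi]; simpa using h
      have hmk : (Submodule.Quotient.mk v : (Fin 3 → F) ⧸ W) = 0 :=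
        b.repr.injective (by rw [hz, map_zero])
      exact (Submodule.Quotient.mk_eq_zero W).mp hmk
  refine ⟨φ ![1,0,0], φ ![0,1,0], φ ![0,0,1], ?_, ?_⟩
  · rintro ⟨h0, h1, h2⟩
    have hφ0 : φ = 0 := by
      apply LinearMap.ext; intro v
      have hv : v = v 0 • ![1,0,0] + v 1 • ![0,1,0] + v 2 • ![0,0,1] := by
        funext i; fin_cases i <;> simp
      rw [hv, map_add, map_add, map_smul, map_smul, map_smul, h0, h1, h2]; simp
    have : W = ⊤ := by
      ext v; simp only [Submodule.mem_top, iff_true, hker, hφ0]; rfl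
    rw [this] at hW
    rw [finrank_top, Module.finrank_fin_fun] at hW
    omega
  · intro v
    rw [hker]
    have hv : v = v 0 • ![1,0,0] + v 1 • ![0,1,0] + v 2 • ![0,0,1] := by
      funext i; fin_cases i <;> simp
    conv_lhs => rw [hv]
    simp only [map_add, map_smul, smul_eq_mul]
    constructor <;> intro h <;> linear_combination h

lemma vec_ne (x y : F) : ![x, y, (1:F)] ≠ 0 := fun h => by
  have := congrFun h 2; simp at this

lemma mem_affLine {α β : F} (v : Fin 3 → F) :
    v ∈ affLine α β ↔ v 1 = α * v 0 + β * v 2 := Iff.rfl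

lemma finrank_affLine (α β : F) : Module.finrank F (affLine α β : Submodule F (Fin 3 → F)) = 2 := by
  have heq : (affLine α β : Submodule F (Fin 3 → F)) = LinearMap.ker (lfun α (-1) β) := by
    ext v
    rw [mem_affLine, LinearMap.mem_ker]
    show _ ↔ α * v 0 + (-1) * v 1 + β * v 2 = 0
    constructor <;> intro h <;> linear_combination -h
  rw [heq]
  apply finrank_ker_lfun ![0, -1, 0]
  show α * 0 + (-1) * (-1) + β * 0 = 1
  ring

lemma mk_aff_eq_iff {x y x' y' : F} :
    Projectivization.mk F ![x,y,1] (vec_ne x y) = Projectivization.mk F ![x',y',1] (vec_ne x' y')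
      ↔ x = x' ∧ y = y' := by
  constructor
  · intro h
    rw [Projectivization.mk_eq_mk_iff] at h
    obtain ⟨a, ha⟩ := h
    have h2 := congrFun ha 2
    have h0 := congrFun ha 0
    have h1 := congrFun ha 1
    simp [Units.smul_def] at h2 h0 h1
    rw [h2] at h0 h1
    simp at h0 h1
    exact ⟨h0.symm, h1.symm⟩
  · rintro ⟨rfl, rfl⟩; rfl

lemma yinf_ne_mk (x y : F) : Yinf F ≠ Projectivization.mk F ![x,y,1] (vec_ne x y) := by
  intro h
  rw [Yinf, Projectivization.mk_eq_mk_iff] at h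
  obtain ⟨a, ha⟩ := h
  have h2 := congrFun ha 2
  simp [Units.smul_def] at h2

/-- Normal form for affine points of `C_{s'}`. -/
lemma conic_rep {s' : F} {P : PGPoint F} (hP : P ∈ conicCs F s') (hPY : P ≠ Yinf F) :
    ∃ t k : F, k ≠ 0 ∧ ∀ i, P.rep i = k * ![t, t^2 - s', 1] i := by
  have hc : P.rep 1 * P.rep 2 = (P.rep 0) ^ 2 - s' * (P.rep 2) ^ 2 := hP
  have hv2 : P.rep 2 ≠ 0 := by
    intro h2
    have h0 : P.rep 0 = 0 := by
      have : (P.rep 0) ^ 2 = 0 := by linear_combination -hc + P.rep 1 * h2 + s' * P.rep 2 * h2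
      exact (pow_eq_zero_iff two_ne_zero).mp this
    have h1 : P.rep 1 ≠ 0 := by
      intro h1
      exact Projectivization.rep_nonzero P (by funext i; fin_cases i <;> simp [h0, h1, h2])
    apply hPY
    rw [← Projectivization.mk_rep P, Yinf]
    rw [Projectivization.mk_eq_mk_iff]
    refine ⟨Units.mk0 (P.rep 1) h1, ?_⟩
    funext i; fin_cases i <;> simp [Units.smul_def, h0, h2]
  refine ⟨P.rep 0 / P.rep 2, P.rep 2, hv2, fun i => ?_⟩
  fin_cases i <;> simp
  · field_simp
  · field_simp
    linear_combination hc

/-- Affine points of `C_{s'}` are not on `C_s` when `s ≠ s'`. -/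
lemma not_mem_conic {s s' : F} (hss' : s ≠ s') {P : PGPoint F}
    (hP : P ∈ conicCs F s') (hPY : P ≠ Yinf F) : P ∉ conicCs F s := by
  obtain ⟨t, k, hk, hrep⟩ := conic_rep hP hPY
  intro hmem
  have hc : P.rep 1 * P.rep 2 = (P.rep 0) ^ 2 - s * (P.rep 2) ^ 2 := hmem
  rw [hrep 0, hrep 1, hrep 2] at hc
  simp only [Matrix.cons_val_zero, Matrix.cons_val_one, Matrix.head_cons,
    Matrix.cons_val_two, Matrix.tail_cons] at hc
  apply hss'
  have h2 : k ^ 2 * s = k ^ 2 * s' := by linear_combination hc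
  exact mul_left_cancel₀ (pow_ne_zero 2 hk) h2

/-- The intersection of `C_s` with the tangent line at the affine point with abscissa `u`. -/
lemma inter_tangent (s u : F) :
    {P | P ∈ conicCs F s ∧ onLine P (affLine (2*u) (-(u^2+s)))} =
      {Projectivization.mk F ![u, u^2 - s, 1] (vec_ne _ _)} := by
  ext P
  simp only [Set.mem_setOf_eq, Set.mem_singleton_iff]
  constructor
  · rintro ⟨hc', hl'⟩
    have hc : P.rep 1 * P.rep 2 = (P.rep 0) ^ 2 - s * (P.rep 2) ^ 2 := hc'
    have hl : P.rep 1 = 2*u * P.rep 0 + (-(u^2+s)) * P.rep 2 :=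
      (mem_affLine _).mp ((onLine_rep P _).mp hl')
    have key : (P.rep 0 - u * P.rep 2) ^ 2 = 0 := by
      linear_combination -hc + P.rep 2 * hl
    have h0 : P.rep 0 = u * P.rep 2 := by
      have := (pow_eq_zero_iff two_ne_zero).mp key
      exact sub_eq_zero.mp this
    have hv2 : P.rep 2 ≠ 0 := by
      intro h2
      apply Projectivization.rep_nonzero P
      have h0' : P.rep 0 = 0 := by rw [h0, h2, mul_zero]
      have h1' : P.rep 1 = 0 := by rw [hl, h0', h2]; ring
      funext i; fin_cases i <;> simp [h0', h1', h2]
    rw [← Projectivization.mk_rep P, Projectivization.mk_eq_mk_iff]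
    refine ⟨Units.mk0 (P.rep 2) hv2, ?_⟩
    funext i
    fin_cases i
    · show P.rep 2 * u = P.rep 0
      rw [h0]; ring
    · show P.rep 2 * (u ^ 2 - s) = P.rep 1
      rw [hl, h0]; ring
    · show P.rep 2 * 1 = P.rep 2
      ring
  · rintro rfl
    constructor
    · rw [mem_conicCs_mk]
      show (u ^ 2 - s) * 1 = u ^ 2 - s * 1 ^ 2
      ring
    · rw [onLine_mk, mem_affLine]
      show u ^ 2 - s = 2 * u * u + -(u ^ 2 + s) * 1
      ring

lemma tangent_at (s u : F) : Tangent (conicCs F s) (affLine (2*u) (-(u^2+s))) :=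
  ⟨finrank_affLine _ _, by rw [inter_tangent]; exact Set.ncard_singleton _⟩

/-- If the line `y = αx + βz` is tangent to `C_s` then its discriminant vanishes. -/
lemma tangent_affLine_disc {s α β : F}
    (h : Set.ncard {P | P ∈ conicCs F s ∧ onLine P (affLine α β)} = 1) :
    α ^ 2 + 4 * (s + β) = 0 := by
  obtain ⟨P0, hP0⟩ := Set.ncard_eq_one.mp h
  have hP0mem : P0 ∈ {P | P ∈ conicCs F s ∧ onLine P (affLine α β)} := by
    rw [hP0]; rfl
  obtain ⟨hc', hl'⟩ := hP0mem
  have hc : P0.rep 1 * P0.rep 2 = (P0.rep 0) ^ 2 - s * (P0.rep 2) ^ 2 := hc'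
  have hl : P0.rep 1 = α * P0.rep 0 + β * P0.rep 2 :=
    (mem_affLine _).mp ((onLine_rep P0 _).mp hl')
  have hv2 : P0.rep 2 ≠ 0 := by
    intro h2
    apply Projectivization.rep_nonzero P0
    have h0' : P0.rep 0 = 0 := by
      have : (P0.rep 0) ^ 2 = 0 := by
        linear_combination -hc + P0.rep 1 * h2 + s * P0.rep 2 * h2
      exact (pow_eq_zero_iff two_ne_zero).mp this
    have h1' : P0.rep 1 = 0 := by rw [hl, h0', h2]; ring
    funext i; fin_cases i <;> simp [h0', h1', h2]
  obtain ⟨x, hx0⟩ : ∃ x, x * P0.rep 2 = P0.rep 0 := ⟨_, div_mul_cancel₀ _ hv2⟩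
  have hquad : P0.rep 0 ^ 2 - α * P0.rep 0 * P0.rep 2 - (s + β) * P0.rep 2 ^ 2 = 0 := by
    linear_combination -hc + P0.rep 2 * hl
  have hroot : x ^ 2 - α * x - (s + β) = 0 := by
    have hq2 : (x ^ 2 - α * x - (s + β)) * P0.rep 2 ^ 2 = 0 := by
      linear_combination hquad + (x * P0.rep 2 + P0.rep 0 - α * P0.rep 2) * hx0
    rcases mul_eq_zero.mp hq2 with h' | h'
    · exact h'
    · exact absurd ((pow_eq_zero_iff two_ne_zero).mp h') hv2
  have hroot2 : (α - x) ^ 2 - α * (α - x) - (s + β) = 0 := by linear_combination hroot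
  have hmem1 : Projectivization.mk F ![x, x^2 - s, 1] (vec_ne _ _) ∈
      {P | P ∈ conicCs F s ∧ onLine P (affLine α β)} := by
    constructor
    · rw [mem_conicCs_mk]
      show (x ^ 2 - s) * 1 = x ^ 2 - s * 1 ^ 2
      ring
    · rw [onLine_mk, mem_affLine]
      show x ^ 2 - s = α * x + β * 1
      linear_combination hroot
  have hmem2 : Projectivization.mk F ![α - x, (α - x)^2 - s, 1] (vec_ne _ _) ∈
      {P | P ∈ conicCs F s ∧ onLine P (affLine α β)} := by
    constructor
    · rw [mem_conicCs_mk]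
      show ((α - x) ^ 2 - s) * 1 = (α - x) ^ 2 - s * 1 ^ 2
      ring
    · rw [onLine_mk, mem_affLine]
      show (α - x) ^ 2 - s = α * (α - x) + β * 1
      linear_combination hroot2
  rw [hP0] at hmem1 hmem2
  rw [Set.mem_singleton_iff] at hmem1 hmem2
  have heq := hmem1.trans hmem2.symm
  have hxx : x = α - x := (mk_aff_eq_iff.mp heq).1
  linear_combination -4 * hroot + (2 * x - α) * hxx
  
lemma vec010_ne : (![0,1,0] : Fin 3 → F) ≠ 0 := fun h => by
  have := congrFun h 1; simp at this

lemma yinf_eq : Yinf F = Projectivization.mk F ![0,1,0] vec010_ne := rfl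

end ProofHelpers

/-- For distinct `s, s' ∈ 𝔽_q`, `q` odd, the affine points of `C_{s'}` are all
external to `C_s` if `χ(s'-s) = 1`, and all internal to `C_s` if `χ(s'-s) = -1`. -/
theorem affine_points_external_or_internal (F : Type) [Field F] [Fintype F]
    [DecidableEq F] (q : ℕ) (hq : Odd q) (hcard : Fintype.card F = q)
    (s s' : F) (hss' : s ≠ s') :
    (quadraticChar F (s' - s) = 1 →
      ∀ P ∈ conicCs F s', P ≠ Yinf F → ExternalPt (conicCs F s) P) ∧
    (quadraticChar F (s' - s) = -1 →
      ∀ P ∈ conicCs F s', P ≠ Yinf F → InternalPt (conicCs F s) P) := by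
  have hchar : ringChar F ≠ 2 := by
    intro h
    have h2 := FiniteField.even_card_iff_char_two.mp h
    rw [hcard] at h2
    have hq2 := Nat.odd_iff.mp hq
    omega
  have h2F : (2 : F) ≠ 0 := Ring.two_ne_zero hchar
  have hs : s' - s ≠ 0 := sub_ne_zero.mpr (Ne.symm hss')
  constructor
  · -- external case
    intro hχ P hP hPY
    obtain ⟨r, hr⟩ := (quadraticChar_one_iff_isSquare hs).mp hχ
    obtain ⟨t, k, hk, hrep⟩ := conic_rep hP hPY
    refine ⟨not_mem_conic hss' hP hPY,
      affLine (2 * (t + r)) (-((t + r) ^ 2 + s)), tangent_at s (t + r), ?_⟩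
    rw [onLine_rep, mem_affLine, hrep 0, hrep 1, hrep 2]
    simp only [Matrix.cons_val_zero, Matrix.cons_val_one, Matrix.head_cons,
      Matrix.cons_val_two, Matrix.tail_cons]
    linear_combination (-k) * hr
  · -- internal case
    intro hχ P hP hPY
    obtain ⟨t, k, hk, hrep⟩ := conic_rep hP hPY
    refine ⟨not_mem_conic hss' hP hPY, ?_⟩
    rintro ⟨W, ⟨hWrank, hWcard⟩, hPW⟩
    obtain ⟨a, b, c, habc, hmem⟩ := exists_lfun_of_finrank_two hWrank
    have hPW' : a * P.rep 0 + b * P.rep 1 + c * P.rep 2 = 0 :=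
      (hmem _).mp ((onLine_rep P W).mp hPW)
    rw [hrep 0, hrep 1, hrep 2] at hPW'
    simp only [Matrix.cons_val_zero, Matrix.cons_val_one, Matrix.head_cons,
      Matrix.cons_val_two, Matrix.tail_cons] at hPW'
    have hlin : a * t + b * (t ^ 2 - s') + c = 0 := by
      apply mul_left_cancel₀ hk
      rw [mul_zero]
      linear_combination hPW'
    rcases eq_or_ne b 0 with hb | hb
    · rcases eq_or_ne a 0 with ha | ha
      · exact habc ⟨ha, hb, by simpa [ha, hb] using hlin⟩
      · -- vertical line: secant, contradiction with tangency
        set γ := -c / a with hγdef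
        have hγ : a * γ = -c := by rw [hγdef]; field_simp
        have hY : Yinf F ∈ {Q | Q ∈ conicCs F s ∧ onLine Q W} := by
          constructor
          · rw [yinf_eq, mem_conicCs_mk]
            show (1:F) * 0 = 0 ^ 2 - s * 0 ^ 2
            ring
          · rw [yinf_eq, onLine_mk, hmem]
            simp [hb]
        have hQ : Projectivization.mk F ![γ, γ ^ 2 - s, 1] (vec_ne _ _) ∈
            {Q | Q ∈ conicCs F s ∧ onLine Q W} := by
          constructor
          · rw [mem_conicCs_mk]
            show (γ ^ 2 - s) * 1 = γ ^ 2 - s * 1 ^ 2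
            ring
          · rw [onLine_mk, hmem]
            show a * γ + b * (γ ^ 2 - s) + c * 1 = 0
            linear_combination hγ + (γ ^ 2 - s) * hb
        obtain ⟨R, hR⟩ := Set.ncard_eq_one.mp hWcard
        rw [hR, Set.mem_singleton_iff] at hY hQ
        exact yinf_ne_mk γ (γ ^ 2 - s) (hY.trans hQ.symm)
    · -- line y = αx + βz : tangency forces χ(s'-s) = 1
      set α := -a / b with hαdef
      set β := -c / b with hβdef
      have hα : b * α = -a := by rw [hαdef]; field_simp
      have hβ : b * β = -c := by rw [hβdef]; field_simp
      have hW : W = affLine α β := by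
        ext v
        rw [hmem v, mem_affLine]
        constructor
        · intro h
          apply mul_left_cancel₀ hb
          show b * v 1 = b * (α * v 0 + β * v 2)
          linear_combination h - v 0 * hα - v 2 * hβ
        · intro h
          linear_combination b * h + v 0 * hα + v 2 * hβ
      rw [hW] at hWcard
      have hdisc : α ^ 2 + 4 * (s + β) = 0 := tangent_affLine_disc hWcard
      have hline : t ^ 2 - s' = α * t + β := by
        apply mul_left_cancel₀ hb
        linear_combination hlin + (-t) * hα - hβ
      have h4 : (2 * t - α) ^ 2 = 4 * (s' - s) := by
        linear_combination 4 * hline + hdisc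
      have hrsq : s' - s = ((2 * t - α) / 2) * ((2 * t - α) / 2) := by
        field_simp
        linear_combination -h4
      have h1 := (quadraticChar_one_iff_isSquare hs).mpr ⟨_, hrsq⟩
      rw [hχ] at h1
      norm_num at h1
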